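/- Pointwise bound at exceptional indices: for every integer n ≥ 1 and all x, y > 0 with |x − y| ≥ n − 1, one has τ_y 1_{[n−1,n)}(x) ≤ C_Γ·4^{α−1/2}·n·(2n−1)^{α−1/2}·(xy)^{−(α+1/2)}. -/

import Mathlib

open MeasureTheory Real Set ENNReal ComplexOrder

noncomputable section

/-- The Haar measure `ω_α(dz) = z^(2α+1) dz` of the Bessel–Kingman hypergroup,
supported on `(0, ∞)`. -/
def omegaM (α : ℝ) : Measure ℝ :=
  (volume.restrict (Set.Ioi (0:ℝ))).withDensity fun z => ENNReal.ofReal (z ^ (2*α+1))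

/-- The interval `I_{n+1} = [n, n+1)` (0-based reindexing of the paper's `I_n = [n-1, n)`). -/
def In (n : ℕ) : Set ℝ := Set.Ico (n : ℝ) ((n : ℝ) + 1)

/-- `ω_α`-measure of the `n`-th interval. -/
def wn (α : ℝ) (n : ℕ) : ℝ≥0∞ := omegaM α (In n)

/-- The discrete amalgam norm `‖f‖_{p,q}` (with the conventions of the paper for
`p = ∞` or `q = ∞`, where the corresponding integral/sum becomes a supremum). -/
def amalgamNorm (α : ℝ) (p q : ℝ≥0∞) {E : Type*} [NormedAddCommGroup E] (f : ℝ → E) : ℝ≥0∞ :=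
  let A : ℕ → ℝ≥0∞ := fun n =>
    if p = ∞ then ⨆ x ∈ In n, (‖f x‖₊ : ℝ≥0∞)
    else ((wn α n)⁻¹ * ∫⁻ x in In n, (‖f x‖₊ : ℝ≥0∞) ^ p.toReal ∂(omegaM α)) ^ (1/p.toReal)
  if q = ∞ then ⨆ n, A n
  else (∑' n, wn α n * (A n) ^ q.toReal) ^ (1/q.toReal)

/-- The constant `C_Γ = Γ(α+1)/(Γ(1/2)·Γ(α+1/2)·2^(2α-1))`. -/
def CGamma (α : ℝ) : ℝ :=
  Real.Gamma (α+1) / (Real.Gamma (1/2) * Real.Gamma (α+1/2) * (2:ℝ) ^ (2*α-1))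

/-- The Bessel–Kingman kernel `K_α(x,y,z)`. -/
def Kker (α x y z : ℝ) : ℝ :=
  CGamma α * ((z^2 - (x-y)^2) * ((x+y)^2 - z^2)) ^ (α - 1/2) / (x*y*z) ^ (2*α)

/-- The hypergroup translation `τ_y f(x)`, with the conventions `τ_0 f = f` and
`τ_y f(0) = f(y)`. -/
def tau {E : Type*} [NormedAddCommGroup E] [NormedSpace ℝ E]
    (α y : ℝ) (f : ℝ → E) (x : ℝ) : E :=
  if y = 0 then f x
  else if x = 0 then f y
  else ∫ z in |x - y|..(x + y), (Kker α x y z * z ^ (2*α+1)) • f z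

/-- The hypergroup convolution `(f ⊛ g)(x) = ∫_0^∞ f(y)·τ_y g(x)·y^(2α+1) dy`. -/
def convBK (α : ℝ) (f g : ℝ → ℂ) (x : ℝ) : ℂ :=
  ∫ y in Set.Ioi (0:ℝ), (y ^ (2*α+1)) • (f y * tau α y g x)

/-- The modified Bessel function `j_α`. -/
def jBessel (α x : ℝ) : ℝ :=
  ∑' k : ℕ, (-1)^k * Real.Gamma (α+1) / (2^(2*k) * (k.factorial : ℝ) * Real.Gamma (α + k + 1))
    * x^(2*k)

/-- The hypergroup Fourier transform `f̂(λ) = ∫_0^∞ f(x)·j_α(λx)·x^(2α+1) dx`. -/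
def fourierBK (α : ℝ) (f : ℝ → ℂ) (lam : ℝ) : ℂ :=
  ∫ x in Set.Ioi (0:ℝ), (jBessel α (lam * x) * x ^ (2*α+1)) • f x

/-- The continuous `(p,∞)`-amalgam norm
`sup_{y ≥ 0} (∫_0^∞ |f(x)|^p · τ_y 1_{[0,1]}(x) · x^(2α+1) dx)^(1/p)`. -/
def contNorm (α p : ℝ) {E : Type*} [NormedAddCommGroup E] (f : ℝ → E) : ℝ≥0∞ :=
  ⨆ y ∈ Set.Ici (0:ℝ),
    (∫⁻ x, (‖f x‖₊ : ℝ≥0∞) ^ p *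
        ENNReal.ofReal (tau α y ((Set.Icc (0:ℝ) 1).indicator 1) x) ∂(omegaM α)) ^ (1/p)

/-- The weight `ω_n = ∫_{n-1}^{n} z^(2α+1) dz`, as a real number. -/
def wIn (α : ℝ) (n : ℕ) : ℝ := ∫ z in ((n:ℝ)-1)..(n:ℝ), z ^ (2*α+1)

lemma CGamma_nonneg (α : ℝ) (hα : 1/2 ≤ α) : 0 ≤ CGamma α := by
  unfold CGamma
  have h1 : 0 < Real.Gamma (α+1) := Real.Gamma_pos_of_pos (by linarith)
  have h2 : 0 < Real.Gamma (1/2) := Real.Gamma_pos_of_pos (by norm_num)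
  have h3 : 0 < Real.Gamma (α+1/2) := Real.Gamma_pos_of_pos (by linarith)
  have h4 : (0:ℝ) < (2:ℝ) ^ (2*α-1) := Real.rpow_pos_of_pos (by norm_num) _
  positivity

lemma ptwise (α : ℝ) (hα : 1/2 ≤ α) (n : ℕ) (hn : 1 ≤ n) (x y z : ℝ)
    (hx : 0 < x) (hy : 0 < y) (h : (n:ℝ) - 1 ≤ |x - y|)
    (hz1 : |x - y| < z) (hz2 : z ≤ x + y) (hz3 : (n:ℝ) - 1 ≤ z) (hz4 : z < n) :
    Kker α x y z * z ^ (2*α+1) ≤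
      CGamma α * (4:ℝ) ^ (α - 1/2) * (n:ℝ) * (2*(n:ℝ) - 1) ^ (α - 1/2) *
        (x*y) ^ (-(α + 1/2)) := by
  have hz0 : 0 < z := lt_of_le_of_lt (abs_nonneg _) hz1
  have hxy : 0 < x*y := mul_pos hx hy
  have hn1 : (1:ℝ) ≤ n := by exact_mod_cast hn
  have hc : 0 ≤ α - 1/2 := by linarith
  have hCG : 0 ≤ CGamma α := CGamma_nonneg α hα
  have hP0 : 0 ≤ z^2 - (x-y)^2 := by nlinarith [sq_abs (x-y), abs_nonneg (x-y)]
  have hQ0 : 0 ≤ (x+y)^2 - z^2 := by nlinarith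
  have hP : z^2 - (x-y)^2 ≤ 2*(n:ℝ) - 1 := by nlinarith [sq_abs (x-y), abs_nonneg (x-y)]
  have hQ : (x+y)^2 - z^2 ≤ 4*(x*y) := by nlinarith [sq_abs (x-y), abs_nonneg (x-y)]
  have h2n : (0:ℝ) ≤ 2*(n:ℝ) - 1 := by linarith
  have hprod : (z^2-(x-y)^2)*((x+y)^2-z^2) ≤ (2*(n:ℝ)-1)*(4*(x*y)) :=
    mul_le_mul hP hQ hQ0 h2n
  have hrp : ((z^2-(x-y)^2)*((x+y)^2-z^2)) ^ (α-1/2)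
      ≤ (2*(n:ℝ)-1) ^ (α-1/2) * ((4:ℝ) ^ (α-1/2) * (x*y) ^ (α-1/2)) := by
    calc ((z^2-(x-y)^2)*((x+y)^2-z^2)) ^ (α-1/2)
        ≤ ((2*(n:ℝ)-1)*(4*(x*y))) ^ (α-1/2) :=
          Real.rpow_le_rpow (mul_nonneg hP0 hQ0) hprod hc
      _ = (2*(n:ℝ)-1) ^ (α-1/2) * ((4*(x*y)) ^ (α-1/2)) :=
          Real.mul_rpow h2n (by positivity)
      _ = (2*(n:ℝ)-1) ^ (α-1/2) * ((4:ℝ) ^ (α-1/2) * (x*y) ^ (α-1/2)) := by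
          rw [Real.mul_rpow (by norm_num) hxy.le]
  have hxyz : (x*y*z) ^ (2*α) = (x*y) ^ (2*α) * z ^ (2*α) :=
    Real.mul_rpow hxy.le hz0.le
  have hz21 : z ^ (2*α+1) = z ^ (2*α) * z := by
    rw [Real.rpow_add hz0, Real.rpow_one]
  have hzpow : (0:ℝ) < z ^ (2*α) := Real.rpow_pos_of_pos hz0 _
  have hxypow : (0:ℝ) < (x*y) ^ (2*α) := Real.rpow_pos_of_pos hxy _
  unfold Kker
  rw [hxyz, hz21]
  have heq : CGamma α * ((z^2-(x-y)^2)*((x+y)^2-z^2)) ^ (α-1/2) / ((x*y)^(2*α) * z^(2*α))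
      * (z^(2*α) * z)
      = CGamma α * ((z^2-(x-y)^2)*((x+y)^2-z^2)) ^ (α-1/2) * z / (x*y)^(2*α) := by
    field_simp
  rw [heq]
  have hstep : CGamma α * ((z^2-(x-y)^2)*((x+y)^2-z^2)) ^ (α-1/2) * z / (x*y)^(2*α)
      ≤ CGamma α * ((2*(n:ℝ)-1) ^ (α-1/2) * ((4:ℝ) ^ (α-1/2) * (x*y) ^ (α-1/2))) * (n:ℝ)
        / (x*y)^(2*α) := by
    gcongr <;> first
      | exact Real.rpow_nonneg (mul_nonneg hP0 hQ0) _
      | exact hz4.le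
  refine hstep.trans_eq ?_
  have hxys : (x*y) ^ (-(α+1/2)) = (x*y) ^ (α-1/2) / (x*y) ^ (2*α) := by
    rw [show -(α+1/2) = (α-1/2) - 2*α by ring, Real.rpow_sub hxy]
  rw [hxys]
  ring

/-- Pointwise bound at exceptional indices:
`τ_y 1_{[n-1,n)}(x) ≤ C_Γ·4^{α-1/2}·n·(2n-1)^{α-1/2}·(xy)^{-(α+1/2)}`
whenever `|x - y| ≥ n - 1`. -/
theorem exceptional_index_bound (α : ℝ) (hα : 1/2 ≤ α) (n : ℕ) (hn : 1 ≤ n)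
    (x y : ℝ) (hx : 0 < x) (hy : 0 < y) (h : (n:ℝ) - 1 ≤ |x - y|) :
    tau α y ((Set.Ico ((n:ℝ)-1) (n:ℝ)).indicator (1 : ℝ → ℝ)) x ≤
      CGamma α * (4:ℝ) ^ (α - 1/2) * (n:ℝ) * (2*(n:ℝ) - 1) ^ (α - 1/2) *
        (x*y) ^ (-(α + 1/2)) := by
  have hyne : y ≠ 0 := ne_of_gt hy
  have hxne : x ≠ 0 := ne_of_gt hx
  have hxy : 0 < x*y := mul_pos hx hy
  have hn1 : (1:ℝ) ≤ n := by exact_mod_cast hn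
  have h2n : (0:ℝ) ≤ 2*(n:ℝ) - 1 := by linarith
  have hCG : 0 ≤ CGamma α := CGamma_nonneg α hα
  have hab : |x - y| ≤ x + y := by
    rw [abs_sub_le_iff]; constructor <;> linarith
  set C : ℝ := CGamma α * (4:ℝ) ^ (α - 1/2) * (n:ℝ) * (2*(n:ℝ) - 1) ^ (α - 1/2) *
      (x*y) ^ (-(α + 1/2)) with hCdef
  have hC0 : 0 ≤ C := by
    rw [hCdef]
    have h4 : (0:ℝ) ≤ (4:ℝ) ^ (α-1/2) := Real.rpow_nonneg (by norm_num) _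
    have h2 : (0:ℝ) ≤ (2*(n:ℝ)-1) ^ (α-1/2) := Real.rpow_nonneg h2n _
    have h3 : (0:ℝ) ≤ (x*y) ^ (-(α+1/2)) := Real.rpow_nonneg hxy.le _
    have hnn : (0:ℝ) ≤ (n:ℝ) := Nat.cast_nonneg n
    positivity
  unfold tau
  rw [if_neg hyne, if_neg hxne, intervalIntegral.integral_of_le hab]
  simp only [smul_eq_mul]
  set s : Set ℝ := Set.Ico ((n:ℝ)-1) (n:ℝ) with hs
  have hsint : Integrable (fun z => C * s.indicator (1:ℝ→ℝ) z)
      (volume.restrict (Set.Ioc (|x-y|) (x+y))) := by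
    apply Integrable.const_mul
    rw [integrable_indicator_iff measurableSet_Ico]
    apply (integrableOn_const_iff (by simp)).mpr
    right
    rw [Measure.restrict_apply measurableSet_Ico]
    exact lt_of_le_of_lt (measure_mono Set.inter_subset_left)
      (by rw [Real.volume_Ico]; exact ENNReal.ofReal_lt_top)
  have h0 : (0 : ℝ → ℝ) ≤ᵐ[volume.restrict (Set.Ioc (|x-y|) (x+y))]
      fun z => (Kker α x y z * z ^ (2*α+1)) * s.indicator 1 z := by
    apply (ae_restrict_iff' measurableSet_Ioc).mpr
    apply ae_of_all
    intro z hz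
    simp only [Pi.zero_apply]
    by_cases hm : z ∈ s
    · simp only [Set.indicator_of_mem hm, Pi.one_apply, mul_one]
      have hz0 : 0 < z := lt_of_le_of_lt (abs_nonneg _) hz.1
      have hP0 : 0 ≤ z^2 - (x-y)^2 := by
        nlinarith [sq_abs (x-y), abs_nonneg (x-y), hz.1]
      have hQ0 : 0 ≤ (x+y)^2 - z^2 := by nlinarith [hz.2]
      unfold Kker
      exact mul_nonneg (div_nonneg (mul_nonneg hCG
        (Real.rpow_nonneg (mul_nonneg hP0 hQ0) _))
        (Real.rpow_nonneg (by positivity) _))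
        (Real.rpow_nonneg hz0.le _)
    · simp [Set.indicator_of_notMem hm]
  have hle : (fun z => (Kker α x y z * z ^ (2*α+1)) * s.indicator 1 z)
      ≤ᵐ[volume.restrict (Set.Ioc (|x-y|) (x+y))]
      fun z => C * s.indicator (1:ℝ→ℝ) z := by
    apply (ae_restrict_iff' measurableSet_Ioc).mpr
    apply ae_of_all
    intro z hz
    by_cases hm : z ∈ s
    · simp only [Set.indicator_of_mem hm, Pi.one_apply, mul_one]
      exact ptwise α hα n hn x y z hx hy h hz.1 hz.2 hm.1 hm.2
    · simp [Set.indicator_of_notMem hm]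
  have hmono : (∫ z in Set.Ioc (|x-y|) (x+y), (Kker α x y z * z ^ (2*α+1)) * s.indicator 1 z)
      ≤ ∫ z in Set.Ioc (|x-y|) (x+y), C * s.indicator (1:ℝ→ℝ) z :=
    integral_mono_of_nonneg h0 hsint hle
  refine hmono.trans ?_
  rw [integral_const_mul, integral_indicator_one measurableSet_Ico]
  have hμ : ((volume.restrict (Set.Ioc (|x-y|) (x+y))) s).toReal ≤ 1 := by
    rw [Measure.restrict_apply measurableSet_Ico]
    have h1 : volume (s ∩ Set.Ioc (|x-y|) (x+y)) ≤ ENNReal.ofReal 1 := by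
      refine (measure_mono Set.inter_subset_left).trans ?_
      rw [Real.volume_Ico, show (n:ℝ) - ((n:ℝ)-1) = 1 by ring]
    calc _ ≤ (ENNReal.ofReal 1).toReal := ENNReal.toReal_mono ENNReal.ofReal_ne_top h1
      _ = 1 := by simp
  calc C * ((volume.restrict (Set.Ioc (|x-y|) (x+y))) s).toReal
      ≤ C * 1 := mul_le_mul_of_nonneg_left hμ hC0
    _ = C := mul_one C
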